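/- The functor between one-object categories SingleObj ℕ ⥤ SingleObj ℤ induced by the inclusion of monoids ℕ → ℤ exhibits SingleObj ℤ as the localization of SingleObj ℕ at the morphism corresponding to 1 ∈ ℕ: for every category E, precomposition gives a fully faithful functor Fun(SingleObj ℤ, E) ⥤ Fun(SingleObj ℕ, E) whose essential image consists of those functors sending the endomorphism corresponding to 1 to an isomorphism. -/

import Mathlib

open CategoryTheory

/-- The inclusion of monoids `ℕ → ℤ` (written multiplicatively). -/
def natToIntMul : Multiplicative ℕ →* Multiplicative ℤ :=
  AddMonoidHom.toMultiplicative (Nat.castAddMonoidHom ℤ)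

/-- The functor `Bℕ ⥤ Bℤ` induced by the inclusion `ℕ → ℤ`. -/
def BNtoBZ : SingleObj (Multiplicative ℕ) ⥤ SingleObj (Multiplicative ℤ) :=
  SingleObj.mapHom _ _ natToIntMul

/-- The endomorphism of the unique object of `Bℕ` corresponding to `1 ∈ ℕ`. -/
def genOne : SingleObj.star (Multiplicative ℕ) ⟶ SingleObj.star (Multiplicative ℕ) :=
  Multiplicative.ofAdd 1

section Aux

variable {E : Type*} [Category E]

open Multiplicative

lemma natToIntMul_ofAdd (n : ℕ) : natToIntMul (ofAdd n) = ofAdd (n : ℤ) := rfl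

/-- The endomorphism of the unique object of `Bℤ` corresponding to `z : ℤ`. -/
abbrev zmor (z : ℤ) :
    SingleObj.star (Multiplicative ℤ) ⟶ SingleObj.star (Multiplicative ℤ) :=
  Multiplicative.ofAdd z

/-- Naturality for all of `ℤ` follows from naturality on the image of `ℕ`. -/
lemma aux_natural {F₁ F₂ : SingleObj (Multiplicative ℤ) ⥤ E}
    (f : F₁.obj (SingleObj.star _) ⟶ F₂.obj (SingleObj.star _))
    (h : ∀ n : ℕ, F₁.map (zmor (n : ℤ)) ≫ f =
      f ≫ F₂.map (zmor (n : ℤ)))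
    (z : ℤ) :
    F₁.map (zmor z) ≫ f =
      f ≫ F₂.map (zmor z) := by
  set m : ℕ := z.natAbs with hm
  set n : ℕ := (z + m).toNat with hn
  have hnz : (n : ℤ) = z + m := by omega
  have hcomp : (zmor z) ≫
      (zmor (m : ℤ)) =
      (zmor (n : ℤ)) := by
    rw [SingleObj.comp_as_mul, ← ofAdd_add, hnz, add_comm]
  have key : (F₁.map (zmor z) ≫ f) ≫
      F₂.map (zmor (m : ℤ)) =
      (f ≫ F₂.map (zmor z)) ≫
      F₂.map (zmor (m : ℤ)) := by
    rw [Category.assoc, ← h m, ← Category.assoc, ← F₁.map_comp, hcomp,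
      h n, Category.assoc, ← F₂.map_comp, hcomp]
  exact (cancel_mono _).mp key

end Aux

/-- `Bℕ → Bℤ` is a localization at the generator: for every category `E`,
precomposition is fully faithful, with essential image the functors inverting the
endomorphism corresponding to `1 ∈ ℕ`. -/
theorem BNtoBZ_localization (E : Type*) [Category E] :
    ((Functor.whiskeringLeft (SingleObj (Multiplicative ℕ)) (SingleObj (Multiplicative ℤ)) E).obj
        BNtoBZ).Full ∧
    ((Functor.whiskeringLeft (SingleObj (Multiplicative ℕ)) (SingleObj (Multiplicative ℤ)) E).obj
        BNtoBZ).Faithful ∧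
    ∀ G : SingleObj (Multiplicative ℕ) ⥤ E,
      ((Functor.whiskeringLeft (SingleObj (Multiplicative ℕ)) (SingleObj (Multiplicative ℤ)) E).obj
        BNtoBZ).essImage G ↔ IsIso (G.map genOne) := by
  refine ⟨?_, ?_, ?_⟩
  · -- Full
    constructor
    intro F₁ F₂ η
    refine ⟨SingleObj.natTrans (η.app (SingleObj.star _)) (fun a => ?_), ?_⟩
    · have h : ∀ n : ℕ, F₁.map (zmor (n : ℤ)) ≫ η.app (SingleObj.star _) =
          η.app (SingleObj.star _) ≫ F₂.map (zmor (n : ℤ)) := fun n =>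
        η.naturality (show SingleObj.star (Multiplicative ℕ) ⟶ _ from Multiplicative.ofAdd n)
      exact aux_natural (η.app (SingleObj.star _)) h a.toAdd
    · ext x
      rfl
  · -- Faithful
    constructor
    intro F₁ F₂ τ₁ τ₂ h
    ext x
    exact congrArg (fun σ : (BNtoBZ ⋙ F₁ ⟶ BNtoBZ ⋙ F₂) => σ.app x) h
  · -- essential image
    intro G
    constructor
    · rintro ⟨F, ⟨e⟩⟩
      rw [← NatIso.isIso_map_iff e genOne]
      show IsIso (F.map (BNtoBZ.map genOne))
      infer_instance
    · intro hg
      set X := G.obj (SingleObj.star (Multiplicative ℕ)) with hX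
      let φ : Multiplicative ℤ →* End X :=
        (Units.coeHom (End X)).comp (((Aut.unitsEndEquivAut X).symm.toMonoidHom).comp
          (zpowersHom (Aut X) (asIso (G.map genOne))))
      let ψ : Multiplicative ℕ →* End X :=
        { toFun := fun a => G.map a
          map_one' := G.map_id _
          map_mul' := fun a b => G.map_comp b a }
      have heq : φ.comp natToIntMul = ψ := by
        apply MonoidHom.ext_mnat
        show φ (Multiplicative.ofAdd (1 : ℤ)) = G.map genOne
        simp [φ]
        erw [zpowersHom_apply, toAdd_ofAdd, zpow_one]
        rfl
      refine ⟨SingleObj.functor φ, ⟨NatIso.ofComponents (fun x => Iso.refl _) (fun a => ?_)⟩⟩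
      simp only [Iso.refl_hom, Category.comp_id, Category.id_comp]
      refine (Category.comp_id _).trans (Eq.trans ?_ (Category.id_comp _).symm)
      exact DFunLike.congr_fun heq a
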